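/- For every triangle-free graph G on n vertices and every l ≥ 1, the number of matchings of size l in G (i.e., sets of l pairwise disjoint edges) is at most (1/l!) · ∏_{i=0}^{l-1} ⌊(n-2i)²/4⌋. -/

import Mathlib

open SimpleGraph

universe u v

/-- An (injective) copy of the graph `F` inside the graph `G`. -/
structure GraphCopy {α : Type u} {β : Type v} (F : SimpleGraph α) (G : SimpleGraph β) where
  toFun : α → β
  inj : Function.Injective toFun
  adj : ∀ {a b : α}, F.Adj a b → G.Adj (toFun a) (toFun b)

/-- `G` contains a copy of `F` (i.e. a subgraph isomorphic to `F`). -/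
def Contains {α : Type u} {β : Type v} (F : SimpleGraph α) (G : SimpleGraph β) : Prop :=
  Nonempty (GraphCopy F G)

/-- `G` contains `k` pairwise vertex-disjoint copies of `F`. -/
def HasDisjCopies {α : Type u} {β : Type v} (F : SimpleGraph α) (G : SimpleGraph β)
    (k : ℕ) : Prop :=
  ∃ c : Fin k → GraphCopy F G,
    ∀ i j : Fin k, i ≠ j → Disjoint (Set.range (c i).toFun) (Set.range (c j).toFun)

/-- The join of two graphs: their disjoint union together with all cross edges. -/
def gJoin {α : Type u} {β : Type v} (G : SimpleGraph α) (H : SimpleGraph β) :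
    SimpleGraph (α ⊕ β) where
  Adj x y :=
    match x, y with
    | Sum.inl a, Sum.inl b => G.Adj a b
    | Sum.inr a, Sum.inr b => H.Adj a b
    | _, _ => True
  symm := ⟨by rintro (a | a) (b | b) h <;> first | exact h.symm | trivial⟩
  loopless := ⟨by rintro (a | a) h; exacts [G.irrefl (v := a) h, H.irrefl (v := a) h]⟩

/-- The Turán number: maximum number of edges of an `n`-vertex `F`-free graph. -/
noncomputable def exNum {α : Type u} (n : ℕ) (F : SimpleGraph α) : ℕ :=
  sSup {m : ℕ | ∃ G : SimpleGraph (Fin n), ¬ Contains F G ∧ m = G.edgeSet.ncard}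

/-- The number of (unlabeled) copies of `H` in `G`, i.e. the number of subgraphs of `G`
isomorphic to `H`. -/
noncomputable def copyCount {α : Type u} {β : Type v} (H : SimpleGraph α)
    (G : SimpleGraph β) : ℕ :=
  {A : G.Subgraph | Nonempty (H ≃g A.coe)}.ncard

/-- The generalized Turán number: maximum number of copies of `H` in an
`n`-vertex `F`-free graph. -/
noncomputable def exGen {α : Type u} {γ : Type v} (n : ℕ) (H : SimpleGraph α)
    (F : SimpleGraph γ) : ℕ :=
  sSup {m : ℕ | ∃ G : SimpleGraph (Fin n), ¬ Contains F G ∧ m = copyCount H G}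

/-- `s` is a matching in `G`: a set of edges of `G`, pairwise vertex-disjoint. -/
def IsMatchingSet {V : Type u} (G : SimpleGraph V) (s : Finset (Sym2 V)) : Prop :=
  ↑s ⊆ G.edgeSet ∧ ∀ e ∈ s, ∀ f ∈ s, e ≠ f → ∀ x : V, x ∈ e → x ∉ f

/-- The number of matchings of size `l` in `G`. -/
noncomputable def matchCount {V : Type u} (G : SimpleGraph V) (l : ℕ) : ℕ :=
  {s : Finset (Sym2 V) | s.card = l ∧ IsMatchingSet G s}.ncard

/-- `G` contains `k` pairwise vertex-disjoint triangles. -/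
def HasDisjTriangles {V : Type u} (G : SimpleGraph V) (k : ℕ) : Prop :=
  ∃ S : Finset (Finset V), S.card = k ∧ (∀ T ∈ S, G.IsNClique 3 T) ∧
    (S : Set (Finset V)).Pairwise fun T T' => Disjoint T T'

/-- The number of copies of `lK₃` (families of `l` pairwise disjoint triangles) in `G`. -/
noncomputable def disjTriFamCount {V : Type u} (G : SimpleGraph V) (l : ℕ) : ℕ :=
  {S : Finset (Finset V) | S.card = l ∧ (∀ T ∈ S, G.IsNClique 3 T) ∧
    (S : Set (Finset V)).Pairwise fun T T' => Disjoint T T'}.ncard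


section Aux
open Finset SimpleGraph

lemma my_mantel {W : Type*} [Fintype W] [DecidableEq W] (G : SimpleGraph W)
    [DecidableRel G.Adj] (hG : G.CliqueFree 3) :
    G.edgeFinset.card ≤ (Fintype.card W) ^ 2 / 4 := by
  rcases isEmpty_or_nonempty W with hW | hW
  · simp [Finset.eq_empty_of_isEmpty G.edgeFinset]
  obtain ⟨A, hA⟩ := G.exists_maximal_degree_vertex
  set Δ := G.degree A with hΔ
  set N := G.neighborFinset A with hN
  have hNcard : N.card = Δ := G.card_neighborFinset_eq_degree A
  set S := (univ : Finset W) \ N with hS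
  have hsub : G.edgeFinset ⊆ S.biUnion (fun v => G.incidenceFinset v) := by
    intro e he
    induction e using Sym2.ind with
    | _ a b =>
      rw [mem_edgeFinset, mem_edgeSet] at he
      have hnot : a ∉ N ∨ b ∉ N := by
        by_contra h
        push_neg at h
        simp only [hN, mem_neighborFinset] at h
        exact hG _ (is3Clique_triple_iff.2 ⟨h.1, h.2, he⟩)
      rcases hnot with h | h
      · exact mem_biUnion.2 ⟨a, by simp [hS, h], (mem_incidenceFinset _ _ _).2
          ⟨G.mem_edgeSet.2 he, Sym2.mem_mk_left a b⟩⟩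
      · exact mem_biUnion.2 ⟨b, by simp [hS, h], (mem_incidenceFinset _ _ _).2
          ⟨G.mem_edgeSet.2 he, Sym2.mem_mk_right a b⟩⟩
  have h1 : G.edgeFinset.card ≤ S.card * Δ := by
    calc G.edgeFinset.card ≤ (S.biUnion (fun v => G.incidenceFinset v)).card :=
          Finset.card_le_card hsub
      _ ≤ ∑ v ∈ S, (G.incidenceFinset v).card := Finset.card_biUnion_le
      _ ≤ ∑ v ∈ S, Δ := Finset.sum_le_sum (fun v _ => by
          rw [G.card_incidenceFinset_eq_degree]; exact (G.degree_le_maxDegree v).trans hA.le)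
      _ = S.card * Δ := by rw [Finset.sum_const, smul_eq_mul]
  have hScard : S.card = Fintype.card W - Δ := by
    rw [hS, Finset.card_sdiff_of_subset (Finset.subset_univ N), hNcard, Finset.card_univ]
  have hΔle : Δ ≤ Fintype.card W := by
    rw [← hNcard, ← Finset.card_univ]; exact Finset.card_le_card (Finset.subset_univ N)
  rw [Nat.le_div_iff_mul_le (by norm_num)]
  calc G.edgeFinset.card * 4 ≤ (Fintype.card W - Δ) * Δ * 4 := by
        rw [← hScard]; exact Nat.mul_le_mul_right 4 h1
    _ ≤ (Fintype.card W) ^ 2 := by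
        have ha : Fintype.card W - Δ + Δ = Fintype.card W := Nat.sub_add_cancel hΔle
        set a := Fintype.card W - Δ
        rw [← ha]
        zify
        nlinarith [sq_nonneg ((a : ℤ) - Δ)]

lemma avoid_le {V : Type*} [Fintype V] (G : SimpleGraph V) (hG : G.CliqueFree 3)
    (s : Finset (Sym2 V)) (hs : IsMatchingSet G s) :
    {e : Sym2 V | e ∈ G.edgeSet ∧ ∀ f ∈ s, ∀ x ∈ e, x ∉ f}.ncard
      ≤ (Fintype.card V - 2 * s.card) ^ 2 / 4 := by
  classical
  set W : Finset V := s.biUnion (fun f => univ.filter (· ∈ f)) with hW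
  have hWmem : ∀ v : V, v ∈ W ↔ ∃ f ∈ s, v ∈ f := by
    intro v; simp [hW]
  -- each edge of the matching covers exactly 2 vertices
  have hcard2 : ∀ f ∈ s, (univ.filter (· ∈ f)).card = 2 := by
    intro f hf
    induction f using Sym2.ind with
    | _ a b =>
      have hadj : G.Adj a b := G.mem_edgeSet.1 (hs.1 hf)
      have : (univ.filter (· ∈ s(a, b))) = {a, b} := by
        ext x; simp [Sym2.mem_iff]
      rw [this, Finset.card_insert_of_notMem (by simp [hadj.ne]), Finset.card_singleton]
  have hWcard : W.card = 2 * s.card := by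
    rw [hW, Finset.card_biUnion]
    · rw [Finset.sum_congr rfl hcard2, Finset.sum_const, smul_eq_mul, Nat.mul_comm]
    · intro f hf g hg hfg
      rw [Function.onFun, Finset.disjoint_left]
      intro x hx hx'
      simp only [Finset.mem_filter] at hx hx'
      exact hs.2 f hf g hg hfg x hx.2 hx'.2
  set T : Set V := {v : V | v ∉ W} with hT
  have hTcard : Fintype.card T = Fintype.card V - 2 * s.card := by
    rw [← hWcard]
    simp only [hT]
    rw [Fintype.card_subtype]
    have : (univ.filter (fun x => x ∈ {v : V | v ∉ W})) = univ \ W := by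
      ext x; simp
    rw [this, Finset.card_sdiff_of_subset (Finset.subset_univ W), Finset.card_univ]
  set G' := G.induce T with hG'
  have hG'free : G'.CliqueFree 3 := hG.comap (Embedding.induce T).isContained
  have hsub : {e : Sym2 V | e ∈ G.edgeSet ∧ ∀ f ∈ s, ∀ x ∈ e, x ∉ f}
      ⊆ (Sym2.map (Subtype.val : T → V)) '' G'.edgeSet := by
    rintro e ⟨he, havoid⟩
    induction e using Sym2.ind with
    | _ a b =>
      have ha : a ∈ T := by
        simp only [hT, Set.mem_setOf_eq, hWmem]
        push_neg
        intro f hf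
        exact havoid f hf a (Sym2.mem_mk_left a b)
      have hb : b ∈ T := by
        simp only [hT, Set.mem_setOf_eq, hWmem]
        push_neg
        intro f hf
        exact havoid f hf b (Sym2.mem_mk_right a b)
      refine ⟨s(⟨a, ha⟩, ⟨b, hb⟩), ?_, by simp⟩
      exact G.mem_edgeSet.1 he
  calc {e : Sym2 V | e ∈ G.edgeSet ∧ ∀ f ∈ s, ∀ x ∈ e, x ∉ f}.ncard
      ≤ ((Sym2.map (Subtype.val : T → V)) '' G'.edgeSet).ncard :=
        Set.ncard_le_ncard hsub (Set.toFinite _)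
    _ ≤ G'.edgeSet.ncard := Set.ncard_image_le (Set.toFinite _)
    _ = G'.edgeFinset.card := by rw [Set.ncard_eq_toFinset_card', edgeFinset]
    _ ≤ (Fintype.card T) ^ 2 / 4 := my_mantel G' hG'free
    _ = (Fintype.card V - 2 * s.card) ^ 2 / 4 := by rw [hTcard]

lemma matching_erase {V : Type*} [DecidableEq V] {G : SimpleGraph V} {s : Finset (Sym2 V)}
    (hs : IsMatchingSet G s) {t : Finset (Sym2 V)} (ht : t ⊆ s) : IsMatchingSet G t :=
  ⟨fun e he => hs.1 (ht he), fun e he f hf hef => hs.2 e (ht he) f (ht hf) hef⟩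

lemma step_lemma {V : Type*} [Fintype V] (G : SimpleGraph V) (hG : G.CliqueFree 3) (l : ℕ) :
    matchCount G (l + 1) * (l + 1)
      ≤ matchCount G l * ((Fintype.card V - 2 * l) ^ 2 / 4) := by
  classical
  have hM : ∀ k : ℕ, matchCount G k
      = (univ.filter (fun s : Finset (Sym2 V) => s.card = k ∧ IsMatchingSet G s)).card := by
    intro k
    rw [matchCount, ← Set.ncard_coe_finset]
    congr 1
    ext s
    simp
  set M : ℕ → Finset (Finset (Sym2 V)) :=
    fun k => univ.filter (fun s : Finset (Sym2 V) => s.card = k ∧ IsMatchingSet G s) with hMdef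
  set A : Finset (Finset (Sym2 V) × Sym2 V) :=
    univ.filter (fun p => (p.1.card = l + 1 ∧ IsMatchingSet G p.1) ∧ p.2 ∈ p.1) with hA
  set B : Finset (Finset (Sym2 V) × Sym2 V) :=
    univ.filter (fun p => (p.1.card = l ∧ IsMatchingSet G p.1) ∧
      p.2 ∈ G.edgeSet ∧ ∀ f ∈ p.1, ∀ x ∈ p.2, x ∉ f) with hB
  -- card A = matchCount (l+1) * (l+1)
  have hcardA : A.card = matchCount G (l + 1) * (l + 1) := by
    rw [hM, Finset.card_eq_sum_card_fiberwise (f := Prod.fst) (t := M (l + 1))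
      (fun p hp => by
        simp only [hA, Finset.mem_coe, Finset.mem_filter, Finset.mem_univ, true_and] at hp
        simp [hMdef, hp.1.1, hp.1.2])]
    rw [Finset.sum_congr rfl (fun s hs => ?_), Finset.sum_const, smul_eq_mul]
    simp only [hMdef, Finset.mem_filter, Finset.mem_univ, true_and] at hs
    have : A.filter (fun p => p.1 = s) = {s} ×ˢ s := by
      ext ⟨t, e⟩
      simp only [hA, Finset.mem_filter, Finset.mem_univ, true_and, Finset.mem_product,
        Finset.mem_singleton]
      constructor
      · rintro ⟨⟨-, he⟩, rfl⟩; exact ⟨rfl, he⟩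
      · rintro ⟨rfl, he⟩; exact ⟨⟨hs, he⟩, rfl⟩
    rw [this, Finset.card_product, Finset.card_singleton, one_mul, hs.1]
  -- injection A → B
  have hAB : A.card ≤ B.card := by
    apply Finset.card_le_card_of_injOn (fun p => (p.1.erase p.2, p.2))
    · intro p hp
      simp only [hA, Finset.mem_coe, Finset.mem_filter, Finset.mem_univ, true_and] at hp
      obtain ⟨⟨hcard, hmatch⟩, hmem⟩ := hp
      simp only [hB, Finset.mem_coe, Finset.mem_filter, Finset.mem_univ, true_and]
      refine ⟨⟨?_, matching_erase hmatch (Finset.erase_subset _ _)⟩, ?_, ?_⟩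
      · rw [Finset.card_erase_of_mem hmem, hcard]; rfl
      · exact hmatch.1 hmem
      · intro f hf x hx
        exact hmatch.2 p.2 hmem f (Finset.mem_of_mem_erase hf)
          (Ne.symm (Finset.ne_of_mem_erase hf)) x hx
    · intro p hp q hq heq
      simp only [hA, Finset.coe_filter, Finset.mem_univ, true_and, Set.mem_setOf_eq] at hp hq
      simp only [Prod.mk.injEq] at heq
      obtain ⟨h1, h2⟩ := heq
      have : p.1 = q.1 := by
        rw [← Finset.insert_erase hp.2, ← Finset.insert_erase hq.2, h1, h2]
      exact Prod.ext this h2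
  -- card B ≤ matchCount l * bound
  have hcardB : B.card ≤ matchCount G l * ((Fintype.card V - 2 * l) ^ 2 / 4) := by
    rw [hM, Finset.card_eq_sum_card_fiberwise (f := Prod.fst) (t := M l)
      (fun p hp => by
        simp only [hB, Finset.mem_coe, Finset.mem_filter, Finset.mem_univ, true_and] at hp
        simp [hMdef, hp.1.1, hp.1.2])]
    have hfib : ∀ t ∈ M l,
        (B.filter (fun p => p.1 = t)).card ≤ (Fintype.card V - 2 * l) ^ 2 / 4 := by
      intro t ht
      simp only [hMdef, Finset.mem_filter, Finset.mem_univ, true_and] at ht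
      have hinj : Set.InjOn (Prod.snd : Finset (Sym2 V) × Sym2 V → Sym2 V)
          ↑(B.filter (fun p => p.1 = t)) := by
        intro p hp q hq heq
        simp only [Finset.coe_filter, Set.mem_setOf_eq] at hp hq
        exact Prod.ext (hp.2.trans hq.2.symm) heq
      have hmaps : ∀ p ∈ (↑(B.filter (fun p => p.1 = t)) : Set (Finset (Sym2 V) × Sym2 V)),
          p.2 ∈ {e : Sym2 V | e ∈ G.edgeSet ∧ ∀ f ∈ t, ∀ x ∈ e, x ∉ f} := by
        intro p hp
        simp only [Finset.coe_filter, Set.mem_setOf_eq, hB, Finset.mem_filter,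
          Finset.mem_univ, true_and] at hp
        obtain ⟨⟨-, he, hav⟩, hpt⟩ := hp
        exact ⟨he, by rw [← hpt]; exact hav⟩
      calc (B.filter (fun p => p.1 = t)).card
          = (↑(B.filter (fun p => p.1 = t)) : Set (Finset (Sym2 V) × Sym2 V)).ncard := (Set.ncard_coe_finset _).symm
        _ ≤ {e : Sym2 V | e ∈ G.edgeSet ∧ ∀ f ∈ t, ∀ x ∈ e, x ∉ f}.ncard :=
            Set.ncard_le_ncard_of_injOn Prod.snd hmaps hinj (Set.toFinite _)
        _ ≤ (Fintype.card V - 2 * t.card) ^ 2 / 4 := avoid_le G hG t ht.2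
        _ = (Fintype.card V - 2 * l) ^ 2 / 4 := by rw [ht.1]
    calc ∑ t ∈ M l, (B.filter (fun p => p.1 = t)).card
        ≤ ∑ t ∈ M l, (Fintype.card V - 2 * l) ^ 2 / 4 := Finset.sum_le_sum hfib
      _ = (M l).card * ((Fintype.card V - 2 * l) ^ 2 / 4) := by
          rw [Finset.sum_const, smul_eq_mul]
    -- note hM gives matchCount = (M l).card
  calc matchCount G (l + 1) * (l + 1) = A.card := hcardA.symm
    _ ≤ B.card := hAB
    _ ≤ matchCount G l * ((Fintype.card V - 2 * l) ^ 2 / 4) := hcardB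

end Aux

/-- A triangle-free graph on `n` vertices has at most
`(1/l!) ∏_{i<l} ⌊(n-2i)²/4⌋` matchings of size `l`. -/
theorem stmt3 {V : Type u} [Fintype V] (G : SimpleGraph V) (hG : G.CliqueFree 3)
    (l n : ℕ) (hn : n = Fintype.card V) :
    matchCount G l * l.factorial ≤ ∏ i ∈ Finset.range l, (n - 2 * i) ^ 2 / 4 := by
  subst hn
  induction l with
  | zero =>
    have h0 : matchCount G 0 = 1 := by
      rw [matchCount]
      have : {s : Finset (Sym2 V) | s.card = 0 ∧ IsMatchingSet G s} = {∅} := by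
        ext s
        simp only [Set.mem_setOf_eq, Set.mem_singleton_iff, Finset.card_eq_zero]
        constructor
        · rintro ⟨rfl, -⟩; rfl
        · rintro rfl
          refine ⟨rfl, by simp, ?_⟩
          intro e he
          exact absurd he (Finset.notMem_empty e)
      rw [this, Set.ncard_singleton]
    simp [h0]
  | succ l ih =>
    rw [Nat.factorial_succ, Finset.prod_range_succ]
    calc matchCount G (l + 1) * ((l + 1) * l.factorial)
        = (matchCount G (l + 1) * (l + 1)) * l.factorial := by ring
      _ ≤ (matchCount G l * ((Fintype.card V - 2 * l) ^ 2 / 4)) * l.factorial :=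
          Nat.mul_le_mul_right _ (step_lemma G hG l)
      _ = (matchCount G l * l.factorial) * ((Fintype.card V - 2 * l) ^ 2 / 4) := by ring
      _ ≤ (∏ i ∈ Finset.range l, (Fintype.card V - 2 * i) ^ 2 / 4)
            * ((Fintype.card V - 2 * l) ^ 2 / 4) :=
          Nat.mul_le_mul_right _ ih
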